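/- Let n ∈ ℕ and q ∈ ℂ with q ≠ 0. Let D be the diagonal (n+1)×(n+1) matrix with diagonal entries q^{r(r-1)/2}, r = 0,…,n, so that D^♯ is the diagonal matrix with entries q^{(n-r)(n-r-1)/2}. Set Φ = σ₁(q,n)·D^♯ and Ψ = D·σ₂(q,n). Then Φ·Ψ·Φ = Ψ·Φ·Ψ = q^{n(n-1)/2}·S(q)·D^♯. -/

import Mathlib

/-- The Gaussian ($q$-)binomial coefficient `C(n,k)_q`, defined by the recursion
`C(n+1,k)_q = C(n,k-1)_q + q^k * C(n,k)_q`, with `C(n,0)_q = C(n,n)_q = 1` and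
`C(n,k)_q = 0` for `k > n`. -/
noncomputable def qBinom (q : ℂ) : ℕ → ℕ → ℂ
  | 0, 0 => 1
  | 0, _ + 1 => 0
  | _ + 1, 0 => 1
  | n + 1, k + 1 => qBinom q n k + q ^ (k + 1) * qBinom q n (k + 1)

/-- The matrix `σ₁(q,n)` with entries `σ₁(q,n)_{km} = C(n-k, n-m)_q`. -/
noncomputable def sigma1 (q : ℂ) (n : ℕ) : Matrix (Fin (n + 1)) (Fin (n + 1)) ℂ :=
  fun k m => qBinom q (n - k.val) (n - m.val)

/-- The matrix `σ₂(q,n)` with entries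
`σ₂(q,n)_{km} = (-1)^{k+m} q^{-(k-m)(k-m-1)/2} C(k,m)_{q⁻¹}` for `m ≤ k`, and `0` otherwise. -/
noncomputable def sigma2 (q : ℂ) (n : ℕ) : Matrix (Fin (n + 1)) (Fin (n + 1)) ℂ :=
  fun k m =>
    if m.val ≤ k.val then
      (-1 : ℂ) ^ (k.val + m.val) *
        q ^ (-(((k.val - m.val) * (k.val - m.val - 1) / 2 : ℕ) : ℤ)) *
        qBinom q⁻¹ k.val m.val
    else 0

/-- The matrix `S(q)` with entries `S(q)_{km} = (-1)^k q^{-k(k-1)/2}` when `k+m = n`,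
and `0` otherwise. -/
noncomputable def Smat (q : ℂ) (n : ℕ) : Matrix (Fin (n + 1)) (Fin (n + 1)) ℂ :=
  fun k m =>
    if k.val + m.val = n then (-1 : ℂ) ^ k.val * q ^ (-((k.val * (k.val - 1) / 2 : ℕ) : ℤ))
    else 0

/-- `A^♯`, the matrix with entries `(A^♯)_{ij} = A_{n-i, n-j}`. -/
noncomputable def msharp {n : ℕ} (A : Matrix (Fin (n + 1)) (Fin (n + 1)) ℂ) :
    Matrix (Fin (n + 1)) (Fin (n + 1)) ℂ :=
  fun i j => A i.rev j.rev

/-! ### Basic facts about Gaussian binomials -/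

lemma qb_zero (q : ℂ) (n : ℕ) : qBinom q n 0 = 1 := by cases n <;> rfl

lemma qb_succ (q : ℂ) (n k : ℕ) :
    qBinom q (n+1) (k+1) = qBinom q n k + q ^ (k + 1) * qBinom q n (k + 1) := rfl

lemma qb_eq_zero (q : ℂ) : ∀ {n k : ℕ}, n < k → qBinom q n k = 0 := by
  intro n
  induction n with
  | zero => intro k h; obtain ⟨k, rfl⟩ := Nat.exists_eq_add_of_lt h; rfl
  | succ n ih =>
    intro k h
    obtain ⟨m, rfl⟩ : ∃ m, k = m + 1 := ⟨k - 1, by omega⟩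
    rw [qb_succ, ih (by omega), ih (by omega)]; ring

lemma qb_self (q : ℂ) (n : ℕ) : qBinom q n n = 1 := by
  induction n with
  | zero => rfl
  | succ n ih => rw [qb_succ, ih, qb_eq_zero q (by omega)]; ring

lemma qb_one_aux (q : ℂ) (p : ℕ) :
    q * qBinom q (p+1) 1 + 1 = qBinom q (p+1) 1 + q ^ (p+1) := by
  induction p with
  | zero =>
    show q * qBinom q 1 1 + 1 = qBinom q 1 1 + q ^ 1
    rw [qb_self]; ring
  | succ p ih =>
    have h : qBinom q (p+2) 1 = 1 + q * qBinom q (p+1) 1 := by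
      rw [show (1:ℕ) = 0 + 1 from rfl, qb_succ, qb_zero]; ring
    rw [h]
    linear_combination q * ih

/-- The second Pascal-type recursion for Gaussian binomials. -/
lemma qb_succ' (q : ℂ) : ∀ (p j : ℕ),
    qBinom q (p+1) (j+1) = q ^ (p - j) * qBinom q p j + qBinom q p (j+1) := by
  intro p
  induction p with
  | zero =>
    intro j
    cases j with
    | zero => simp [qb_self, qb_zero, qb_eq_zero q (by omega : (0:ℕ) < 1)]
    | succ j =>
      rw [qb_eq_zero q (by omega), qb_eq_zero q (by omega), qb_eq_zero q (by omega)]; ring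
  | succ p ih =>
    intro j
    cases j with
    | zero =>
      rw [qb_succ, qb_zero, Nat.sub_zero, pow_one]
      have h1 : qBinom q (p+1) (0+1) = qBinom q (p+1) 1 := rfl
      rw [h1, mul_one]
      linear_combination qb_one_aux q p
    | succ j =>
      by_cases hjp : j + 1 ≤ p
      · have h0 : qBinom q (p+1+1) (j+1+1)
            = qBinom q (p+1) (j+1) + q^(j+1+1) * qBinom q (p+1) (j+1+1) := qb_succ q (p+1) (j+1)
        have h1 := qb_succ q p j
        have h2 := qb_succ q p (j+1)
        have h3 := ih j
        have h4 := ih (j+1)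
        have e1 : q ^ (p+1-(j+1)) = q ^ (p - j) := by congr 1; omega
        have e2 : q ^ (j+1+1) * q ^ (p - (j+1)) = q ^ (p+1) := by rw [← pow_add]; congr 1; omega
        have e3 : q ^ (p - j) * q ^ (j+1) = q ^ (p+1) := by rw [← pow_add]; congr 1; omega
        rw [h0, e1]
        linear_combination h3 + q^(j+1+1) * h4 - q^(p-j) * h1 - h2 - qBinom q p (j+1) * (e3 - e2)
      · by_cases hj : j = p
        · subst hj
          rw [qb_self, qb_self, Nat.sub_self, qb_eq_zero q (by omega)]; ring
        · rw [qb_eq_zero q (by omega), qb_eq_zero q (by omega), qb_eq_zero q (by omega)]; ring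

/-- Symmetry of the Gaussian binomial coefficients. -/
lemma qb_symm (q : ℂ) : ∀ (K j : ℕ), j ≤ K → qBinom q K j = qBinom q K (K - j) := by
  intro K
  induction K with
  | zero => intro j hj; interval_cases j; rfl
  | succ K ih =>
    intro j hj
    cases j with
    | zero => simp [qb_zero, qb_self]
    | succ j =>
      cases Nat.eq_or_lt_of_le hj with
      | inl h =>
        rw [h]; simp [qb_self, qb_zero]
      | inr h =>
        have hjK : j ≤ K := by omega
        have hj1 : j + 1 ≤ K := by omega
        have h1 : K + 1 - (j+1) = (K - (j+1)) + 1 := by omega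
        have e1 : K - (K-(j+1)) = j+1 := by omega
        have e2 : K - (j+1) + 1 = K - j := by omega
        rw [qb_succ, h1, qb_succ', ih j hjK, ih (j+1) hj1, e1, e2]
        ring

/-! ### Triangle-number helpers -/

lemma tri_succ (n : ℕ) : (n+1)*n/2 = n*(n-1)/2 + n := by
  cases n with
  | zero => rfl
  | succ n =>
    have h : (n+2)*(n+1) = (n+1)*n + (n+1)*2 := by ring
    rw [h, Nat.add_mul_div_right _ _ (by norm_num : 0 < 2)]
    simp

lemma tri_add (a b : ℕ) : (a+b)*((a+b)-1)/2 = a*(a-1)/2 + (b*(b-1)/2 + a*b) := by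
  induction b with
  | zero => simp
  | succ b ih =>
    have h1 : a + (b+1) = (a+b) + 1 := by ring
    have h2 : a + b + 1 - 1 = a + b := rfl
    have h3 : b + 1 - 1 = b := rfl
    rw [h1, h2, h3, tri_succ, ih, tri_succ]
    ring

lemma neg_one_pow_sub (j K : ℕ) (h : j ≤ K) : (-1:ℂ)^(K-j) = (-1)^K * (-1)^j := by
  have h2 : ((-1:ℂ)^j) * ((-1)^j) = 1 := by
    rw [← pow_add, ← two_mul, pow_mul]; norm_num
  have h1 : (-1:ℂ)^(K-j) * (-1)^j = (-1)^K := by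
    rw [← pow_add, Nat.sub_add_cancel h]
  calc (-1:ℂ)^(K-j) = (-1:ℂ)^(K-j) * ((-1)^j * (-1)^j) := by rw [h2, mul_one]
    _ = (-1)^K * (-1)^j := by rw [← mul_assoc, h1]

/-! ### Inversion of the parameter -/

lemma qb_inv (q : ℂ) (hq : q ≠ 0) : ∀ (k m : ℕ),
    q ^ (m * (k - m)) * qBinom q⁻¹ k m = qBinom q k m := by
  intro k
  induction k with
  | zero =>
    intro m
    cases m with
    | zero => simp [qb_zero]
    | succ m =>
      rw [qb_eq_zero q⁻¹ (Nat.succ_pos m), qb_eq_zero q (Nat.succ_pos m)]; ring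
  | succ k ih =>
    intro m
    cases m with
    | zero => simp [qb_zero]
    | succ m =>
      by_cases hmk : m + 1 ≤ k
      · have ha : q ^ ((m+1)*(k+1-(m+1))) = q^(k-m) * q^(m*(k-m)) := by
          rw [← pow_add]; congr 1
          have h : k + 1 - (m+1) = k - m := by omega
          rw [h]; ring
        have hb : q ^ ((m+1)*(k+1-(m+1))) * (q⁻¹)^(m+1) = q^((m+1)*(k-(m+1))) := by
          have h : (m+1)*(k+1-(m+1)) = (m+1)*(k-(m+1)) + (m+1) := by
            have h' : k + 1 - (m+1) = (k-(m+1)) + 1 := by omega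
            rw [h']; ring
          rw [h, pow_add, inv_pow, mul_assoc,
            mul_inv_cancel₀ (pow_ne_zero _ hq), mul_one]
        rw [qb_succ q⁻¹ k m]
        calc q ^ ((m+1)*(k+1-(m+1))) * (qBinom q⁻¹ k m + q⁻¹^(m+1) * qBinom q⁻¹ k (m+1))
            = q^(k-m) * (q^(m*(k-m)) * qBinom q⁻¹ k m) +
              (q ^ ((m+1)*(k+1-(m+1))) * (q⁻¹)^(m+1)) * qBinom q⁻¹ k (m+1) := by
              rw [ha]; ring
          _ = q^(k-m) * qBinom q k m +
              q^((m+1)*(k-(m+1))) * qBinom q⁻¹ k (m+1) := by rw [ih m, hb]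
          _ = q^(k-m) * qBinom q k m + qBinom q k (m+1) := by rw [ih (m+1)]
          _ = qBinom q (k+1) (m+1) := (qb_succ' q k m).symm
      · by_cases hm : m = k
        · subst hm
          rw [qb_self, qb_self, Nat.sub_self]
          simp
        · rw [qb_eq_zero q⁻¹ (by omega), qb_eq_zero q (by omega)]; ring

/-! ### The alternating-sum identity -/

lemma qb_alt (q : ℂ) (K : ℕ) (hK : 1 ≤ K) :
    ∑ j ∈ Finset.range (K+1), (-1:ℂ)^j * q^(j*(j-1)/2) * qBinom q K j = 0 := by
  obtain ⟨L, rfl⟩ : ∃ L, K = L + 1 := ⟨K - 1, by omega⟩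
  rw [Finset.sum_range_succ' _ (L+1)]
  set A : ℕ → ℂ := fun j => (-1:ℂ)^(j+1) * q^((j+1)*j/2) * qBinom q L j with hA
  have key : ∀ j ∈ Finset.range (L+1),
      (-1:ℂ)^(j+1) * q^((j+1)*(j+1-1)/2) * qBinom q (L+1) (j+1) = A j - A (j+1) := by
    intro j _
    have e0 : (j+1)*(j+1-1)/2 = (j+1)*j/2 := rfl
    have e : (j+2)*(j+1)/2 = (j+1)*j/2 + (j+1) := tri_succ (j+1)
    rw [qb_succ, hA]
    simp only []
    have e1 : (j+1+1)*(j+1)/2 = (j+1)*j/2 + (j+1) := e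
    rw [e0, e1, pow_add, pow_succ]
    ring
  rw [Finset.sum_congr rfl key, Finset.sum_range_sub']
  have hA0 : A 0 = -1 := by simp [hA, qb_zero]
  have hAL : A (L+1) = 0 := by simp [hA, qb_eq_zero q (by omega : L < L+1)]
  rw [hA0, hAL]
  simp [qb_zero]

/-! ### The subset-of-subset identity -/

lemma qb_subset (q : ℂ) : ∀ (n k m : ℕ), m ≤ k →
    qBinom q n k * qBinom q k m = qBinom q n m * qBinom q (n-m) (k-m) := by
  intro n
  induction n with
  | zero =>
    intro k m hmk
    cases k with
    | zero => interval_cases m; simp [qb_zero]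
    | succ k =>
      rw [qb_eq_zero q (Nat.succ_pos k)]
      cases m with
      | zero => simp [qb_zero, qb_eq_zero q (Nat.succ_pos k)]
      | succ m => rw [qb_eq_zero q (Nat.succ_pos m)]; ring
  | succ n ih =>
    intro k m hmk
    cases k with
    | zero => interval_cases m; simp [qb_zero]
    | succ k =>
      cases m with
      | zero => simp [qb_zero]
      | succ m =>
        by_cases hkn : k + 1 ≤ n + 1
        · by_cases hmk' : m + 1 ≤ k
          · -- main case : m < k, k ≤ n
            obtain ⟨a, ha⟩ : ∃ a, n - m = a + 1 := ⟨n-m-1, by omega⟩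
            obtain ⟨b, hb⟩ : ∃ b, k - m = b + 1 := ⟨k-m-1, by omega⟩
            have d1 : n + 1 - (m+1) = n - m := by omega
            have d2 : k + 1 - (m+1) = k - m := by omega
            have d3 : n - (m+1) = a := by omega
            have d4 : k - (m+1) = b := by omega
            have d5 : k + 1 - (m+1) = b + 1 := by omega
            rw [d1, d2]
            rw [qb_succ q n k, qb_succ q n m]
            have hP2 := qb_succ q k m
            have hP3 : qBinom q (n-m) (k-m) =
                qBinom q a b + q^(b+1) * qBinom q a (b+1) := by
              rw [ha, hb]; exact qb_succ q a b
            have ih1 := ih k m (by omega)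
            have ih2 := ih k (m+1) hmk'
            rw [d3, d4] at ih2
            have ih3 := ih (k+1) (m+1) (by omega)
            rw [d3, d5] at ih3
            have hq1 : q^(m+1) * q^(b+1) = q^(k+1) := by
              rw [← pow_add]; congr 1; omega
            linear_combination qBinom q n k * hP2 + q^(k+1) * ih3 + ih1 + q^(m+1) * ih2
              - q^(m+1) * qBinom q n (m+1) * hP3
              - qBinom q n (m+1) * qBinom q a (b+1) * hq1
          · have : m = k := by omega
            subst this
            rw [qb_self, Nat.sub_self, qb_zero]
        · rw [qb_eq_zero q (by omega : n + 1 < k + 1)]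
          by_cases hm : m + 1 ≤ n + 1
          · rw [qb_eq_zero q (by omega : n + 1 - (m+1) < k + 1 - (m+1))]; ring
          · rw [qb_eq_zero q (by omega : n + 1 < m + 1)]; ring

/-! ### The Vandermonde-type identity -/

lemma qb_vand (q : ℂ) : ∀ (K n M : ℕ), K ≤ n → M ≤ n →
    ∑ b ∈ Finset.range (n+1),
      (-1:ℂ)^b * q^(b*(b-1)/2) * qBinom q K b * qBinom q (n-b) M
    = q^(K*(n-M)) * qBinom q (n-K) (n-M) := by
  intro K
  induction K with
  | zero =>
    intro n M _ hM
    rw [Finset.sum_eq_single_of_mem 0 (by simp) ?h0]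
    case h0 =>
      intro b _ hb
      obtain ⟨c, rfl⟩ : ∃ c, b = c + 1 := ⟨b-1, by omega⟩
      rw [qb_eq_zero q (Nat.succ_pos c)]; ring
    simp only [pow_zero, one_mul, Nat.zero_mul, Nat.sub_zero, Nat.zero_div, qb_zero]
    exact qb_symm q n M hM
  | succ K ihK =>
    intro n M hK hM
    cases M with
    | zero =>
      rw [← Finset.sum_subset (Finset.range_subset_range.mpr (by omega : K+2 ≤ n+1))
        (by
          intro x hx hx2
          simp only [Finset.mem_range] at hx hx2
          rw [qb_eq_zero q (by omega : K+1 < x)]; ring)]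
      rw [Finset.sum_congr rfl (fun b _ => by rw [qb_zero, mul_one]), qb_alt q (K+1) (by omega)]
      rw [Nat.sub_zero, qb_eq_zero q (by omega : n-(K+1) < n), mul_zero]
    | succ M' =>
      obtain ⟨n', rfl⟩ : ∃ n', n = n'+1 := ⟨n-1, by omega⟩
      have hKn : K ≤ n' := by omega
      have hMn : M' ≤ n' := by omega
      set g : ℕ → ℂ := fun b =>
        (-1:ℂ)^b * q^((b+1)*b/2) * qBinom q K b * qBinom q (n'+1-b) (M'+1) with hg
      set h : ℕ → ℂ := fun b =>
        (-1:ℂ)^b * q^((b+1)*b/2) * qBinom q K b * qBinom q (n'-b) (M'+1) with hh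
      rw [Finset.sum_range_succ' _ (n'+1)]
      have key : ∀ b ∈ Finset.range (n'+1),
          (-1:ℂ)^(b+1) * q^((b+1)*(b+1-1)/2) * qBinom q (K+1) (b+1)
            * qBinom q (n'+1-(b+1)) (M'+1)
          = g (b+1) - h b := by
        intro b _
        have e0 : (b+1)*(b+1-1)/2 = (b+1)*b/2 := rfl
        have e1 : (b+1+1)*(b+1)/2 = (b+1)*b/2 + (b+1) := tri_succ (b+1)
        have e2 : n' + 1 - (b+1) = n' - b := by omega
        rw [qb_succ, hg, hh]
        simp only []
        rw [e0, e1, e2, pow_add, pow_succ]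
        ring
      rw [Finset.sum_congr rfl key, Finset.sum_sub_distrib]
      have hg0 : (-1:ℂ)^(0:ℕ) * q^(0*(0-1)/2) * qBinom q (K+1) 0
          * qBinom q (n'+1-0) (M'+1) = g 0 := by
        rw [hg]; simp [qb_zero]
      rw [hg0]
      have hgs : (∑ b ∈ Finset.range (n'+1), g (b+1)) - (∑ b ∈ Finset.range (n'+1), h b) + g 0
          = (∑ b ∈ Finset.range (n'+2), g b) - ∑ b ∈ Finset.range (n'+1), h b := by
        rw [Finset.sum_range_succ' g (n'+1)]; ring
      rw [hgs, Finset.sum_range_succ g (n'+1)]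
      have hgtop : g (n'+1) = 0 := by
        rw [hg]; simp only []
        rw [qb_eq_zero q (by omega : K < n'+1)]; ring
      rw [hgtop, add_zero, ← Finset.sum_sub_distrib]
      have key2 : ∀ b ∈ Finset.range (n'+1), g b - h b
          = q^(n'-M') * ((-1:ℂ)^b * q^(b*(b-1)/2) * qBinom q K b * qBinom q (n'-b) M') := by
        intro b hb
        simp only [Finset.mem_range] at hb
        have e2 : n' + 1 - b = (n' - b) + 1 := by omega
        rw [hg, hh]
        simp only []
        rw [e2, qb_succ' q (n'-b) M']
        by_cases hMb : M' ≤ n' - b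
        · have e3 : (b+1)*b/2 + (n'-b-M') = b*(b-1)/2 + (n'-M') := by
            rw [tri_succ b]; omega
          have e4 : q^((b+1)*b/2) * q^(n'-b-M') = q^(b*(b-1)/2) * q^(n'-M') := by
            rw [← pow_add, ← pow_add, e3]
          linear_combination ((-1:ℂ)^b * qBinom q K b * qBinom q (n'-b) M') * e4
        · rw [qb_eq_zero q (by omega : n'-b < M')]
          ring
      rw [Finset.sum_congr rfl key2, ← Finset.mul_sum, ihK n' M' hKn hMn]
      have e5 : n'+1 - (M'+1) = n' - M' := by omega
      have e6 : n'+1 - (K+1) = n' - K := by omega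
      rw [e5, e6, ← mul_assoc, ← pow_add]
      congr 2
      have : (K+1) * (n'-M') = (n'-M') + K * (n'-M') := by ring
      omega

/-! ### Restricting and reindexing range sums -/

lemma sum_range_to_Ico (u n : ℕ) (f : ℕ → ℂ) (hu : u ≤ n)
    (hz : ∀ x < u, f x = 0) :
    ∑ b ∈ Finset.range (n+1), f b = ∑ j ∈ Finset.range (n+1-u), f (u+j) := by
  rw [Finset.range_eq_Ico,
    ← Finset.sum_subset (Finset.Ico_subset_Ico (Nat.zero_le u) le_rfl)
      (fun x hx1 hx2 => hz x (by
        simp only [Finset.mem_Ico] at hx1 hx2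
        omega)),
    Finset.sum_Ico_eq_sum_range]

/-! ### The two product identities -/

lemma qb_prod1 (q : ℂ) (n k u : ℕ) (hk : k ≤ n) (hu : u ≤ n) :
    ∑ a ∈ Finset.range (n+1),
      (-1:ℂ)^a * q^(a*(a-1)/2 + (n-a)*u) * qBinom q k a * qBinom q a u
    = if k = u then (-1:ℂ)^u * q^(u*(u-1)/2 + (n-u)*u) else 0 := by
  by_cases huk : u ≤ k
  · rw [sum_range_to_Ico u n _ hu
      (fun x hx => by rw [qb_eq_zero q hx]; ring)]
    have key : ∀ j ∈ Finset.range (n+1-u),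
        (-1:ℂ)^(u+j) * q^((u+j)*((u+j)-1)/2 + (n-(u+j))*u) * qBinom q k (u+j) * qBinom q (u+j) u
        = ((-1:ℂ)^u * q^(u*(u-1)/2 + (n-u)*u) * qBinom q k u)
          * ((-1:ℂ)^j * q^(j*(j-1)/2) * qBinom q (k-u) j) := by
      intro j hj
      simp only [Finset.mem_range] at hj
      have e : (u+j)*((u+j)-1)/2 + (n-(u+j))*u
          = (u*(u-1)/2 + (n-u)*u) + j*(j-1)/2 := by
        have h1 := tri_add u j
        have h2 : n - (u+j) = (n-u) - j := by omega
        rw [h1, h2, Nat.sub_mul, Nat.mul_comm u j]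
        have h3 : j*u ≤ (n-u)*u := Nat.mul_le_mul_right u (by omega)
        generalize j*u = Q at h3 ⊢
        generalize (n-u)*u = P at h3 ⊢
        generalize u*(u-1)/2 = A
        generalize j*(j-1)/2 = B
        omega
      have hsub : qBinom q k (u+j) * qBinom q (u+j) u
          = qBinom q k u * qBinom q (k-u) j := by
        rw [qb_subset q k (u+j) u (by omega)]
        congr 1
        congr 1
        omega
      rw [e, pow_add q (u*(u-1)/2 + (n-u)*u) (j*(j-1)/2), pow_add (-1:ℂ) u j]
      linear_combination ((-1:ℂ)^u * (-1)^j
        * (q^(u*(u-1)/2 + (n-u)*u) * q^(j*(j-1)/2))) * hsub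
    rw [Finset.sum_congr rfl key, ← Finset.mul_sum]
    by_cases hku : k = u
    · subst hku
      rw [if_pos rfl]
      have hinner : ∑ j ∈ Finset.range (n+1-k),
          (-1:ℂ)^j * q^(j*(j-1)/2) * qBinom q (k-k) j = 1 := by
        rw [Finset.sum_eq_single_of_mem 0 (by simp only [Finset.mem_range]; omega)
          (fun b _ hb => by
            rw [Nat.sub_self, qb_eq_zero q (by omega : 0 < b)]; ring)]
        simp [qb_zero]
      rw [hinner, qb_self, mul_one, mul_one]
    · rw [if_neg hku]
      have hK1 : 1 ≤ k - u := by omega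
      have hinner : ∑ j ∈ Finset.range (n+1-u),
          (-1:ℂ)^j * q^(j*(j-1)/2) * qBinom q (k-u) j = 0 := by
        rw [← Finset.sum_subset (Finset.range_subset_range.mpr (by omega : (k-u)+1 ≤ n+1-u))
          (fun x _ hx2 => by
            simp only [Finset.mem_range] at hx2
            rw [qb_eq_zero q (by omega : k-u < x)]; ring)]
        exact qb_alt q (k-u) hK1
      rw [hinner, mul_zero]
  · rw [if_neg (by omega), Finset.sum_eq_zero]
    intro a _
    by_cases hau : a < u
    · rw [qb_eq_zero q hau]; ring
    · rw [qb_eq_zero q (by omega : k < a)]; ring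

lemma qb_prod2 (q : ℂ) (n k u : ℕ) (hk : k ≤ n) (hu : u ≤ n) :
    ∑ b ∈ Finset.range (n+1),
      (-1:ℂ)^b * q^((n-b)*((n-b)-1)/2 + (n-k)*b) * qBinom q k b * qBinom q b u
    = if k = u then (-1:ℂ)^k * q^((n-k)*((n-k)-1)/2 + (n-k)*k) else 0 := by
  by_cases huk : u ≤ k
  · rw [sum_range_to_Ico u n _ hu (fun x hx => by rw [qb_eq_zero q hx]; ring)]
    have key : ∀ j ∈ Finset.range (n+1-u),
        (-1:ℂ)^(u+j) * q^((n-(u+j))*((n-(u+j))-1)/2 + (n-k)*(u+j))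
          * qBinom q k (u+j) * qBinom q (u+j) u
        = ((-1:ℂ)^u * q^((n-k)*u) * qBinom q k u)
          * ((-1:ℂ)^j * q^((n-(u+j))*((n-(u+j))-1)/2 + (n-k)*j) * qBinom q (k-u) j) := by
      intro j hj
      simp only [Finset.mem_range] at hj
      have hsub : qBinom q k (u+j) * qBinom q (u+j) u
          = qBinom q k u * qBinom q (k-u) j := by
        rw [qb_subset q k (u+j) u (by omega)]
        congr 1
        congr 1
        omega
      have e : (n-(u+j))*((n-(u+j))-1)/2 + (n-k)*(u+j)
          = ((n-(u+j))*((n-(u+j))-1)/2 + (n-k)*j) + (n-k)*u := by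
        rw [Nat.mul_add]
        generalize (n-(u+j))*((n-(u+j))-1)/2 = A
        generalize (n-k)*u = B
        generalize (n-k)*j = C
        omega
      rw [e, pow_add q _ ((n-k)*u), pow_add (-1:ℂ) u j]
      linear_combination ((-1:ℂ)^u * (-1)^j
        * (q^((n-(u+j))*((n-(u+j))-1)/2 + (n-k)*j) * q^((n-k)*u))) * hsub
    rw [Finset.sum_congr rfl key, ← Finset.mul_sum]
    by_cases hku : k = u
    · subst hku
      rw [if_pos rfl]
      have hinner : ∑ j ∈ Finset.range (n+1-k),
          (-1:ℂ)^j * q^((n-(k+j))*((n-(k+j))-1)/2 + (n-k)*j) * qBinom q (k-k) j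
          = q^((n-k)*((n-k)-1)/2) := by
        rw [Finset.sum_eq_single_of_mem 0 (by simp only [Finset.mem_range]; omega)
          (fun b _ hb => by
            rw [Nat.sub_self, qb_eq_zero q (by omega : 0 < b)]; ring)]
        rw [Nat.sub_self, qb_zero]
        norm_num
      rw [hinner, qb_self, mul_one, mul_assoc, ← pow_add]
      congr 2
      omega
    · rw [if_neg hku]
      set K := k - u with hKdef
      have hK1 : 1 ≤ K := by omega
      have hinner : ∑ j ∈ Finset.range (n+1-u),
          (-1:ℂ)^j * q^((n-(u+j))*((n-(u+j))-1)/2 + (n-k)*j) * qBinom q K j = 0 := by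
        rw [← Finset.sum_subset (Finset.range_subset_range.mpr (by omega : K+1 ≤ n+1-u))
          (fun x _ hx2 => by
            simp only [Finset.mem_range] at hx2
            rw [qb_eq_zero q (by omega : K < x)]; ring)]
        rw [← Finset.sum_range_reflect]
        have key2 : ∀ j ∈ Finset.range (K+1),
            (-1:ℂ)^(K+1-1-j) * q^((n-(u+(K+1-1-j)))*((n-(u+(K+1-1-j)))-1)/2 + (n-k)*(K+1-1-j))
              * qBinom q K (K+1-1-j)
            = ((-1:ℂ)^K * q^((n-k)*((n-k)-1)/2 + (n-k)*K))
              * ((-1:ℂ)^j * q^(j*(j-1)/2) * qBinom q K j) := by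
          intro j hj
          simp only [Finset.mem_range] at hj
          have hjK : j ≤ K := by omega
          have h1 : K + 1 - 1 - j = K - j := by omega
          have h2 : n - (u + (K - j)) = (n-k) + j := by omega
          have e : ((n-k)+j)*(((n-k)+j)-1)/2 + (n-k)*(K-j)
              = ((n-k)*((n-k)-1)/2 + (n-k)*K) + j*(j-1)/2 := by
            have h3 := tri_add (n-k) j
            have h4 : (n-k)*(K-j) = (n-k)*K - (n-k)*j := by
              rw [Nat.mul_comm (n-k) (K-j), Nat.sub_mul, Nat.mul_comm K (n-k),
                Nat.mul_comm j (n-k)]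
            have h5 : (n-k)*j ≤ (n-k)*K := Nat.mul_le_mul_left (n-k) hjK
            rw [h3, h4]
            generalize (n-k)*j = Q at h5 ⊢
            generalize (n-k)*K = P at h5 ⊢
            generalize (n-k)*((n-k)-1)/2 = A
            generalize j*(j-1)/2 = B
            omega
          rw [h1, h2, e, ← qb_symm q K j hjK, neg_one_pow_sub j K hjK,
            pow_add q ((n-k)*((n-k)-1)/2 + (n-k)*K) (j*(j-1)/2)]
          ring
        rw [Finset.sum_congr rfl key2, ← Finset.mul_sum, qb_alt q K hK1, mul_zero]
      rw [hinner, mul_zero]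
  · rw [if_neg (by omega), Finset.sum_eq_zero]
    intro a _
    by_cases hau : a < u
    · rw [qb_eq_zero q hau]; ring
    · rw [qb_eq_zero q (by omega : k < a)]; ring

theorem qFerrand_braid_relation (n : ℕ) (q : ℂ) (hq : q ≠ 0)
    (D Φ Ψ : Matrix (Fin (n + 1)) (Fin (n + 1)) ℂ)
    (hD : D = Matrix.diagonal (fun r : Fin (n + 1) => q ^ (r.val * (r.val - 1) / 2)))
    (hΦ : Φ = sigma1 q n * msharp D)
    (hΨ : Ψ = D * sigma2 q n) :
    Φ * Ψ * Φ = Ψ * Φ * Ψ ∧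
      Φ * Ψ * Φ = q ^ (n * (n - 1) / 2) • (Smat q n * msharp D) := by
  -- the sharp of the diagonal matrix
  have hDsh : msharp D
      = Matrix.diagonal (fun r : Fin (n + 1) => q ^ ((n - r.val) * ((n - r.val) - 1) / 2)) := by
    subst hD
    ext i j
    by_cases hij : i = j
    · subst hij
      have e : (i.rev.val) = n - i.val := by rw [Fin.val_rev]; omega
      simp only [msharp, Matrix.diagonal_apply_eq, e]
    · have : i.rev ≠ j.rev := fun hc => hij (Fin.rev_injective hc)
      simp only [msharp, Matrix.diagonal_apply_ne _ hij, Matrix.diagonal_apply_ne _ this]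
  -- entries of Φ
  have hPhi : ∀ k m : Fin (n+1),
      Φ k m = qBinom q (n - k.val) (n - m.val) * q^((n-m.val)*((n-m.val)-1)/2) := by
    intro k m
    rw [hΦ, hDsh, Matrix.mul_diagonal]
    rfl
  -- entries of Ψ
  have hPsi : ∀ k m : Fin (n+1),
      Ψ k m = (-1:ℂ)^(k.val+m.val) * (q^(m.val*(m.val-1)/2) * qBinom q k.val m.val) := by
    intro k m
    rw [hΨ, hD, Matrix.diagonal_mul]
    show q ^ (k.val * (k.val - 1) / 2) * sigma2 q n k m = _
    rw [sigma2]
    by_cases hmk : m.val ≤ k.val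
    · rw [if_pos hmk]
      have hz : q ^ (-(((k.val - m.val) * (k.val - m.val - 1) / 2 : ℕ) : ℤ))
          = (q ^ ((k.val - m.val) * (k.val - m.val - 1) / 2))⁻¹ := by
        rw [zpow_neg, zpow_natCast]
      have hsplit : q ^ (k.val*(k.val-1)/2)
          = q ^ ((k.val-m.val)*((k.val-m.val)-1)/2)
            * (q ^ (m.val*(m.val-1)/2) * q ^ (m.val*(k.val-m.val))) := by
        rw [← pow_add, ← pow_add]
        congr 1
        have h1 := tri_add (k.val-m.val) m.val
        have h2 : k.val - m.val + m.val = k.val := by omega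
        rw [h2] at h1
        rw [h1, Nat.mul_comm (k.val-m.val) m.val]
      have hinv := qb_inv q hq k.val m.val
      have hcan : q ^ ((k.val - m.val) * (k.val - m.val - 1) / 2)
          * (q ^ ((k.val - m.val) * (k.val - m.val - 1) / 2))⁻¹ = 1 :=
        mul_inv_cancel₀ (pow_ne_zero _ hq)
      rw [hz, hsplit]
      linear_combination ((-1:ℂ)^(k.val+m.val) * q^(m.val*(m.val-1)/2)
          * q^((k.val-m.val)*((k.val-m.val)-1)/2)
          * (q ^ ((k.val-m.val)*((k.val-m.val)-1)/2))⁻¹) * hinv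
        + ((-1:ℂ)^(k.val+m.val) * q^(m.val*(m.val-1)/2) * qBinom q k.val m.val) * hcan
    · rw [if_neg hmk, qb_eq_zero q (by omega : k.val < m.val)]
      ring
  -- entries of Φ * Ψ
  have hR : ∀ k m : Fin (n+1), (Φ * Ψ) k m
      = (-1:ℂ)^(n+m.val)
        * (q^(m.val*(m.val-1)/2 + (n-k.val)*(n-m.val)) * qBinom q k.val (n-m.val)) := by
    intro k m
    rw [Matrix.mul_apply]
    have step1 : ∀ a : Fin (n+1), Φ k a * Ψ a m
        = ((-1:ℂ)^(m.val) * q^(m.val*(m.val-1)/2))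
          * ((-1:ℂ)^(a.val) * q^((n-a.val)*((n-a.val)-1)/2)
             * qBinom q (n-k.val) (n-a.val) * qBinom q a.val m.val) := by
      intro a
      rw [hPhi k a, hPsi a m, pow_add (-1:ℂ) a.val m.val]
      ring
    rw [Finset.sum_congr rfl (fun a _ => step1 a), ← Finset.mul_sum,
      Fin.sum_univ_eq_sum_range (fun i => (-1:ℂ)^i * q^((n-i)*((n-i)-1)/2)
        * qBinom q (n-k.val) (n-i) * qBinom q i m.val) (n+1),
      ← Finset.sum_range_reflect]
    have step2 : ∀ b ∈ Finset.range (n+1),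
        (-1:ℂ)^(n+1-1-b) * q^((n-(n+1-1-b))*((n-(n+1-1-b))-1)/2)
          * qBinom q (n-k.val) (n-(n+1-1-b)) * qBinom q (n+1-1-b) m.val
        = (-1:ℂ)^n * ((-1:ℂ)^b * q^(b*(b-1)/2)
            * qBinom q (n-k.val) b * qBinom q (n-b) m.val) := by
      intro b hb
      simp only [Finset.mem_range] at hb
      have h1 : n + 1 - 1 - b = n - b := by omega
      have h2 : n - (n - b) = b := by omega
      rw [h1, h2, neg_one_pow_sub b n (by omega)]
      ring
    rw [Finset.sum_congr rfl step2, ← Finset.mul_sum,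
      qb_vand q (n-k.val) n m.val (by omega) (by omega)]
    have h3 : n - (n - k.val) = k.val := by omega
    rw [h3, pow_add (-1:ℂ) n m.val,
      pow_add q (m.val*(m.val-1)/2) ((n-k.val)*(n-m.val))]
    ring
  -- useful sign fact
  have hsq : ∀ j : ℕ, ((-1:ℂ)^j) * ((-1:ℂ)^j) = 1 := by
    intro j
    rw [← pow_add, ← two_mul, pow_mul]; norm_num
  -- entries of Ψ * (Φ * Ψ)
  have hT1 : ∀ k m : Fin (n+1), (Ψ * (Φ * Ψ)) k m
      = if k.val + m.val = n then (-1:ℂ)^k.val * q^(n*(n-1)/2) else 0 := by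
    intro k m
    rw [Matrix.mul_apply]
    have step1 : ∀ a : Fin (n+1), Ψ k a * (Φ * Ψ) a m
        = ((-1:ℂ)^(k.val) * ((-1:ℂ)^(n+m.val) * q^(m.val*(m.val-1)/2)))
          * ((-1:ℂ)^(a.val) * q^(a.val*(a.val-1)/2 + (n-a.val)*(n-m.val))
             * qBinom q k.val a.val * qBinom q a.val (n-m.val)) := by
      intro a
      rw [hPsi k a, hR a m, pow_add (-1:ℂ) k.val a.val,
        pow_add q (m.val*(m.val-1)/2) ((n-a.val)*(n-m.val)),
        pow_add q (a.val*(a.val-1)/2) ((n-a.val)*(n-m.val))]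
      ring
    rw [Finset.sum_congr rfl (fun a _ => step1 a), ← Finset.mul_sum,
      Fin.sum_univ_eq_sum_range (fun i => (-1:ℂ)^i * q^(i*(i-1)/2 + (n-i)*(n-m.val))
        * qBinom q k.val i * qBinom q i (n-m.val)) (n+1),
      qb_prod1 q n k.val (n-m.val) (by omega) (by omega)]
    by_cases hkm : k.val + m.val = n
    · rw [if_pos (by omega : k.val = n - m.val), if_pos hkm]
      have h2 : n - m.val = k.val := by omega
      have h3 : n - k.val = m.val := by omega
      rw [h2, h3]
      have hs : (-1:ℂ)^(n+m.val) = (-1:ℂ)^(k.val) := by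
        rw [show n + m.val = k.val + 2*m.val by omega, pow_add, pow_mul]
        norm_num
      rw [hs]
      have hE : q^(m.val*(m.val-1)/2) * q^(k.val*(k.val-1)/2 + m.val*k.val)
          = q^(n*(n-1)/2) := by
        rw [← pow_add]
        congr 1
        have h4 := tri_add k.val m.val
        rw [hkm] at h4
        rw [h4, Nat.mul_comm k.val m.val]
        omega
      linear_combination ((-1:ℂ)^(k.val) * q^(m.val*(m.val-1)/2)
          * q^(k.val*(k.val-1)/2 + m.val*k.val)) * hsq k.val
        + (-1:ℂ)^(k.val) * hE
    · rw [if_neg (by omega : ¬ k.val = n - m.val), if_neg hkm, mul_zero]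
  -- entries of (Φ * Ψ) * Φ
  have hT2 : ∀ k m : Fin (n+1), ((Φ * Ψ) * Φ) k m
      = if k.val + m.val = n then (-1:ℂ)^k.val * q^(n*(n-1)/2) else 0 := by
    intro k m
    rw [Matrix.mul_apply]
    have step1 : ∀ a : Fin (n+1), (Φ * Ψ) k a * Φ a m
        = ((-1:ℂ)^n * q^((n-m.val)*((n-m.val)-1)/2))
          * ((-1:ℂ)^(a.val) * q^(a.val*(a.val-1)/2 + (n-k.val)*(n-a.val))
             * qBinom q k.val (n-a.val) * qBinom q (n-a.val) (n-m.val)) := by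
      intro a
      rw [hR k a, hPhi a m, pow_add (-1:ℂ) n a.val,
        pow_add q (a.val*(a.val-1)/2) ((n-k.val)*(n-a.val))]
      ring
    rw [Finset.sum_congr rfl (fun a _ => step1 a), ← Finset.mul_sum,
      Fin.sum_univ_eq_sum_range (fun i => (-1:ℂ)^i * q^(i*(i-1)/2 + (n-k.val)*(n-i))
        * qBinom q k.val (n-i) * qBinom q (n-i) (n-m.val)) (n+1),
      ← Finset.sum_range_reflect]
    have step2 : ∀ b ∈ Finset.range (n+1),
        (-1:ℂ)^(n+1-1-b) * q^((n+1-1-b)*((n+1-1-b)-1)/2 + (n-k.val)*(n-(n+1-1-b)))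
          * qBinom q k.val (n-(n+1-1-b)) * qBinom q (n-(n+1-1-b)) (n-m.val)
        = (-1:ℂ)^n * ((-1:ℂ)^b * q^((n-b)*((n-b)-1)/2 + (n-k.val)*b)
            * qBinom q k.val b * qBinom q b (n-m.val)) := by
      intro b hb
      simp only [Finset.mem_range] at hb
      have h1 : n + 1 - 1 - b = n - b := by omega
      have h2 : n - (n - b) = b := by omega
      rw [h1, h2, neg_one_pow_sub b n (by omega)]
      ring
    rw [Finset.sum_congr rfl step2, ← Finset.mul_sum,
      qb_prod2 q n k.val (n-m.val) (by omega) (by omega)]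
    by_cases hkm : k.val + m.val = n
    · rw [if_pos (by omega : k.val = n - m.val), if_pos hkm]
      have h2 : n - m.val = k.val := by omega
      have h3 : n - k.val = m.val := by omega
      rw [h2, h3]
      have hE : q^(k.val*(k.val-1)/2) * q^(m.val*(m.val-1)/2 + m.val*k.val)
          = q^(n*(n-1)/2) := by
        rw [← pow_add]
        congr 1
        have h4 := tri_add k.val m.val
        rw [hkm] at h4
        rw [h4, Nat.mul_comm k.val m.val]
      linear_combination ((-1:ℂ)^(k.val) * q^(k.val*(k.val-1)/2)
          * q^(m.val*(m.val-1)/2 + m.val*k.val)) * hsq n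
        + (-1:ℂ)^(k.val) * hE
    · rw [if_neg (by omega : ¬ k.val = n - m.val), if_neg hkm, mul_zero, mul_zero]
  -- entries of the right-hand side
  have hT3 : ∀ k m : Fin (n+1), (q ^ (n * (n - 1) / 2) • (Smat q n * msharp D)) k m
      = if k.val + m.val = n then (-1:ℂ)^k.val * q^(n*(n-1)/2) else 0 := by
    intro k m
    rw [Matrix.smul_apply, hDsh, Matrix.mul_diagonal, smul_eq_mul]
    show q ^ (n * (n - 1) / 2) * (Smat q n k m * q ^ ((n - m.val) * ((n - m.val) - 1) / 2)) = _
    rw [Smat]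
    by_cases hkm : k.val + m.val = n
    · rw [if_pos hkm, if_pos hkm]
      have h2 : n - m.val = k.val := by omega
      rw [h2]
      have hz : q ^ (-((k.val * (k.val - 1) / 2 : ℕ) : ℤ))
          = (q ^ (k.val * (k.val - 1) / 2))⁻¹ := by
        rw [zpow_neg, zpow_natCast]
      have hcan : q ^ (k.val * (k.val - 1) / 2) * (q ^ (k.val * (k.val - 1) / 2))⁻¹ = 1 :=
        mul_inv_cancel₀ (pow_ne_zero _ hq)
      rw [hz]
      linear_combination (q ^ (n*(n-1)/2) * (-1:ℂ)^(k.val)) * hcan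
    · rw [if_neg hkm, if_neg hkm]
      ring
  constructor
  · ext i j
    rw [show Ψ * Φ * Ψ = Ψ * (Φ * Ψ) from mul_assoc Ψ Φ Ψ]
    rw [show (Φ * Ψ * Φ) i j = ((Φ * Ψ) * Φ) i j from rfl, hT2 i j, hT1 i j]
  · ext i j
    rw [show (Φ * Ψ * Φ) i j = ((Φ * Ψ) * Φ) i j from rfl, hT2 i j, hT3 i j]
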